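/- There exists an absolute constant C₀ > 0, independent of n, K and X, with the following property. Let K be a compact set in a Banach space X, let n ≥ 1, and let Π_0, …, Π_{n-1}, X_0, …, X_{n-1}, f_1, …, f_{n-1} be generated by the generalized EIM (i.e., X_0 = {0}, Π_0 = 0; for each k, f_k ∈ K satisfies ‖f_k − Π_{k-1} f_k‖ = max_{f ∈ K} ‖f − Π_{k-1} f‖, X_k = span{f_1,…,f_k}, and Π_k : span(K) → X_k is a linear projection restricting to the identity on X_k). Let Λ_k := sup{‖Π_k g‖/‖g‖ : 0 ≠ g ∈ span(K)} be the Lebesgue constants, assumed finite. Then sup_{f ∈ K} ‖f − Π_{n-1} f‖ ≤ C₀ · (1 + Λ_{n-1}) · (∏_{k=1}^{n-1} (1 + Λ_k))^{1/n} · n · ε_n(co(K)). -/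

import Mathlib

open scoped BigOperators ENNReal NNReal
open Metric Set MeasureTheory

noncomputable section

/-- Closed symmetric convex hull of `K`. -/
def symConvHull {X : Type*} [NormedAddCommGroup X] [NormedSpace ℝ X] (K : Set X) : Set X :=
  closure (convexHull ℝ (K ∪ -K))

/-- Entropy numbers: minimal radius so that `A` is covered by `2^n` balls. -/
def entropyNum {X : Type*} [NormedAddCommGroup X] (n : ℕ) (A : Set X) : ℝ :=
  sInf {ε : ℝ | 0 < ε ∧ ∃ C : Finset X, C.card ≤ 2 ^ n ∧ A ⊆ ⋃ c ∈ C, Metric.closedBall c ε}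

/-- `δ_{X,n}`: supremum over all `n`-dimensional subspaces of `X` of the Banach–Mazur
distance to `ℓ₂ⁿ`. -/
def deltaBM (X : Type*) [NormedAddCommGroup X] [NormedSpace ℝ X] (n : ℕ) : ℝ :=
  ⨆ Y : {Y : Submodule ℝ X // Module.finrank ℝ Y = n},
    ⨅ T : (Y.1 ≃L[ℝ] EuclideanSpace ℝ (Fin n)),
      ‖T.toContinuousLinearMap‖ * ‖T.symm.toContinuousLinearMap‖

/-- Volume of the unit Euclidean ball in `ℝⁿ`. -/
def volBall (n : ℕ) : ℝ := Real.pi ^ ((n : ℝ) / 2) / Real.Gamma ((n : ℝ) / 2 + 1)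

/-- Modulus of smoothness of a normed space `X`. -/
def modSmooth (X : Type*) [NormedAddCommGroup X] (t : ℝ) : ℝ :=
  sSup {r : ℝ | ∃ x y : X, ‖x‖ = 1 ∧ ‖y‖ = t ∧ r = ‖x + y‖ / 2 + ‖x - y‖ / 2 - 1}

/-- The set of ℓ¹-costs of expansions `f = Σ aᵢ gᵢ` with `gᵢ ∈ K`;
its infimum is `‖f‖_{L1(K)}`. -/
def expanSums {X : Type*} [NormedAddCommGroup X] [NormedSpace ℝ X] (K : Set X) (f : X) :
    Set ℝ :=
  {c | ∃ (a : ℕ → ℝ) (g : ℕ → X), (∀ i, g i ∈ K) ∧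
    HasSum (fun i => a i • g i) f ∧ HasSum (fun i => |a i|) c}

/-- The K-functional between `X` and `L1(K)`. -/
def Kfunctional {X : Type*} [NormedAddCommGroup X] [NormedSpace ℝ X] (K : Set X) (t : ℝ)
    (g : X) : ℝ :=
  sInf {r : ℝ | ∃ h : X, (expanSums K h).Nonempty ∧ r = ‖g - h‖ + t * sInf (expanSums K h)}

/-- The set whose supremum is the interpolation norm `‖g‖_θ`. -/
def thetaSet {X : Type*} [NormedAddCommGroup X] [NormedSpace ℝ X] (K : Set X) (θ : ℝ)
    (g : X) : Set ℝ :=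
  {r | ∃ t : ℝ, 0 < t ∧ r = t ^ (-θ) * Kfunctional K t g}


set_option maxHeartbeats 1000000
lemma hull_mem {X : Type*} [NormedAddCommGroup X] [NormedSpace ℝ X] (K : Set X) {n : ℕ}
    (c : Fin n → ℝ) (g : Fin n → X) (hg : ∀ m, g m ∈ K) (hc : ∑ m, |c m| ≤ 1)
    (hne : K.Nonempty) : ∑ m, c m • g m ∈ convexHull ℝ (K ∪ -K) := by
  set s := convexHull ℝ (K ∪ -K) with hs_def
  have hs : Convex ℝ s := convex_convexHull ℝ _
  obtain ⟨y0, hy0⟩ := hne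
  have h1 : y0 ∈ s := subset_convexHull ℝ _ (Or.inl hy0)
  have h2 : -y0 ∈ s := subset_convexHull ℝ _ (Or.inr (by simpa using hy0))
  have h0 : (0 : X) ∈ s := by
    have := hs h1 h2 (by norm_num : (0:ℝ) ≤ 1/2) (by norm_num : (0:ℝ) ≤ 1/2) (by norm_num)
    rwa [smul_neg, add_neg_cancel] at this
  set t : Option (Fin n) → ℝ := fun i => i.elim (1 - ∑ m, |c m|) (fun m => |c m|) with ht_def
  set y : Option (Fin n) → X := fun i => i.elim 0 (fun m => if 0 ≤ c m then g m else -g m)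
    with hy_def
  have key : ∑ i : Option (Fin n), t i • y i ∈ s := by
    apply hs.sum_mem
    · intro i _
      cases i with
      | none => simpa [ht_def] using hc
      | some m => simp [ht_def, abs_nonneg]
    · rw [Fintype.sum_option]; simp [ht_def]
    · intro i _
      cases i with
      | none => exact h0
      | some m =>
        by_cases hm : 0 ≤ c m
        · simp only [hy_def, ht_def, Option.elim, if_pos hm]
          exact subset_convexHull ℝ _ (Or.inl (hg m))
        · simp only [hy_def, ht_def, Option.elim, if_neg hm]
          exact subset_convexHull ℝ _ (Or.inr (by simpa using hg m))
  rw [Fintype.sum_option] at key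
  have hterm : ∀ m, t (some m) • y (some m) = c m • g m := by
    intro m
    by_cases hm : 0 ≤ c m
    · simp [ht_def, hy_def, if_pos hm, abs_of_nonneg hm]
    · push_neg at hm
      simp [ht_def, hy_def, if_neg (not_le.mpr hm), abs_of_neg hm]
  have heq : ∑ m : Fin n, t (some m) • y (some m) = ∑ m : Fin n, c m • g m :=
    Finset.sum_congr rfl (fun m _ => hterm m)
  rw [heq] at key
  simpa [ht_def, hy_def] using key

lemma isLUB_empty_false (a : ℝ) (h : IsLUB (∅ : Set ℝ) a) : False := by
  have h1 : a ≤ a - 1 := h.2 (by intro y hy; exact absurd hy (Set.notMem_empty y))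
  linarith

/-- EIM error bound in a general Banach space with an absolute constant. -/
theorem stmt_3 :
    ∃ C₀ : ℝ, 0 < C₀ ∧
      ∀ (X : Type) [NormedAddCommGroup X] [NormedSpace ℝ X] [CompleteSpace X],
      ∀ (K : Set X), IsCompact K →
      ∀ (n : ℕ), 1 ≤ n →
      ∀ (P : ℕ → (Submodule.span ℝ K →ₗ[ℝ] X)) (fs : ℕ → Submodule.span ℝ K)
        (Xs : ℕ → Submodule ℝ X) (Λ : ℕ → ℝ),
      (∀ k, Xs k = Submodule.span ℝ ((fun j => ((fs j : X))) '' Set.Icc 1 k)) →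
      P 0 = 0 →
      (∀ k, 1 ≤ k → k ≤ n - 1 → (fs k : X) ∈ K) →
      (∀ k, 1 ≤ k → k ≤ n - 1 → ∀ x : Submodule.span ℝ K, (x : X) ∈ K →
        ‖(x : X) - P (k - 1) x‖ ≤ ‖(fs k : X) - P (k - 1) (fs k)‖) →
      (∀ k ≤ n - 1, ∀ x : Submodule.span ℝ K, P k x ∈ Xs k) →
      (∀ k ≤ n - 1, ∀ x : Submodule.span ℝ K, (x : X) ∈ Xs k → P k x = x) →
      Λ 0 = 0 →
      (∀ k, 1 ≤ k → k ≤ n - 1 →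
        IsLUB {c : ℝ | ∃ x : Submodule.span ℝ K, x ≠ 0 ∧
          c = ‖P k x‖ / ‖(x : X)‖} (Λ k)) →
      ∀ x : Submodule.span ℝ K, (x : X) ∈ K →
        ‖(x : X) - P (n - 1) x‖
          ≤ C₀ * (1 + Λ (n - 1)) *
              (∏ k ∈ Finset.Icc 1 (n - 1), (1 + Λ k)) ^ ((1 : ℝ) / n) * n *
              entropyNum n (symConvHull K) := by
  classical
  refine ⟨6, by norm_num, ?_⟩
  intro X _ _ _ K hK n hn P fs Xs Λ hXs hP0 hfsK hgreedy hPmem hPid hΛ0 hLUB x hxK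
  -- basic facts on Xs
  have hXsle : ∀ k, Xs k ≤ Submodule.span ℝ K := by
    intro k
    rw [hXs k]
    apply Submodule.span_le.mpr
    rintro _ ⟨j, _, rfl⟩
    exact (fs j).2
  have hXsmono : ∀ j k : ℕ, j ≤ k → Xs j ≤ Xs k := by
    intro j k hjk
    rw [hXs j, hXs k]
    exact Submodule.span_mono (Set.image_mono (Set.Icc_subset_Icc_right hjk))
  -- entropy set is nonempty and consists of positives
  set S : Set ℝ :=
    {ε : ℝ | 0 < ε ∧ ∃ C : Finset X, C.card ≤ 2 ^ n ∧
      symConvHull K ⊆ ⋃ c ∈ C, Metric.closedBall c ε} with hS_def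
  have hSne : S.Nonempty := by
    obtain ⟨R, hR⟩ := hK.isBounded.subset_closedBall 0
    refine ⟨|R| + 1, by positivity, {0}, by simpa using Nat.one_le_two_pow, ?_⟩
    have hsub : symConvHull K ⊆ Metric.closedBall 0 (|R| + 1) := by
      apply closure_minimal ?_ Metric.isClosed_closedBall
      apply convexHull_min ?_ (convex_closedBall 0 (|R| + 1))
      rintro y (hy | hy)
      · have := hR hy
        simp only [Metric.mem_closedBall] at this ⊢
        have : |R| ≥ R := le_abs_self R
        calc dist y 0 ≤ R := hR hy
          _ ≤ |R| + 1 := by linarith [le_abs_self R]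
      · rw [Set.mem_neg] at hy
        have h1 : dist (-y) 0 ≤ R := hR hy
        simp only [Metric.mem_closedBall, dist_zero_right] at h1 ⊢
        rw [norm_neg] at h1
        calc ‖y‖ ≤ R := h1
          _ ≤ |R| + 1 := by linarith [le_abs_self R]
    intro y hy
    simp only [Finset.mem_singleton, Set.mem_iUnion]
    exact ⟨0, rfl, hsub hy⟩
  have hEnonneg : 0 ≤ sInf S := Real.sInf_nonneg (fun ε hε => le_of_lt hε.1)
  have hEnt : entropyNum n (symConvHull K) = sInf S := rfl
  -- dispatch the degenerate case where span K has no nonzero vector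
  by_cases hex : ∃ z : Submodule.span ℝ K, z ≠ 0
  swap
  · push_neg at hex
    rcases Nat.lt_or_ge n 2 with hn2 | hn2
    · -- n = 1
      have hn1 : n = 1 := by omega
      subst hn1
      have hx0 : x = 0 := hex x
      have hLHS : ‖(x : X) - P 0 x‖ = 0 := by
        rw [hx0, hP0]
        simp
      rw [hLHS]
      simp only [Nat.sub_self, hΛ0]
      rw [show Finset.Icc 1 0 = (∅ : Finset ℕ) by rfl]
      simp only [Finset.prod_empty, Real.one_rpow]
      rw [hEnt]
      norm_num
      linarith [hEnonneg]
    · exfalso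
      have h1 := hLUB 1 le_rfl (by omega)
      have : {c : ℝ | ∃ x : Submodule.span ℝ K, x ≠ 0 ∧
          c = ‖P 1 x‖ / ‖(x : X)‖} = ∅ := by
        ext c
        simp only [Set.mem_setOf_eq, Set.mem_empty_iff_false, iff_false, not_exists]
        intro z hz
        exact absurd (hex z) hz.1
      rw [this] at h1
      exact isLUB_empty_false _ h1
  obtain ⟨z₀, hz₀⟩ := hex
  have hz₀X : ‖(z₀ : X)‖ ≠ 0 := by
    simp only [ne_eq, norm_eq_zero]
    intro h
    exact hz₀ (Subtype.ext (by simpa using h))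
  -- Λ is nonnegative
  have hΛnn : ∀ k ≤ n - 1, 0 ≤ Λ k := by
    intro k hk
    rcases Nat.eq_zero_or_pos k with hk0 | hk1
    · rw [hk0, hΛ0]
    · have h := hLUB k hk1 hk
      have hmem : ‖P k z₀‖ / ‖(z₀ : X)‖ ∈ {c : ℝ | ∃ x : Submodule.span ℝ K, x ≠ 0 ∧
          c = ‖P k x‖ / ‖(x : X)‖} := ⟨z₀, hz₀, rfl⟩
      have := h.1 hmem
      have hnn : 0 ≤ ‖P k z₀‖ / ‖(z₀ : X)‖ := by positivity
      linarith
  -- operator norm bound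
  have hPnorm : ∀ k ≤ n - 1, ∀ z : Submodule.span ℝ K, ‖P k z‖ ≤ Λ k * ‖(z : X)‖ := by
    intro k hk z
    rcases Nat.eq_zero_or_pos k with hk0 | hk1
    · rw [hk0, hP0, hΛ0]
      simp
    · by_cases hz : z = 0
      · rw [hz]
        simp
      · have hzX : ‖(z : X)‖ ≠ 0 := by
          simp only [ne_eq, norm_eq_zero]
          intro h
          apply hz
          exact Subtype.ext (by simpa using h)
        have h := hLUB k hk1 hk
        have hmem : ‖P k z‖ / ‖(z : X)‖ ∈ {c : ℝ | ∃ x : Submodule.span ℝ K, x ≠ 0 ∧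
            c = ‖P k x‖ / ‖(x : X)‖} := ⟨z, hz, rfl⟩
        have hle := h.1 hmem
        have hpos : 0 < ‖(z : X)‖ := lt_of_le_of_ne (norm_nonneg _) (Ne.symm hzX)
        calc ‖P k z‖ = (‖P k z‖ / ‖(z : X)‖) * ‖(z : X)‖ := by field_simp
          _ ≤ Λ k * ‖(z : X)‖ := mul_le_mul_of_nonneg_right hle (norm_nonneg _)
  -- abbreviations
  set σ : ℝ := ‖(x : X) - P (n - 1) x‖ with hσ_def
  have hσnn : 0 ≤ σ := norm_nonneg _
  set Pr : ℝ := ∏ k ∈ Finset.Icc 1 (n - 1), (1 + Λ k) with hPr_def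
  have hPr1 : 1 ≤ Pr := by
    have h := Finset.prod_le_prod (s := Finset.Icc 1 (n-1)) (f := fun _ => (1:ℝ))
      (g := fun k => 1 + Λ k) (by intros; norm_num) (by
        intro k hk
        simp only [Finset.mem_Icc] at hk
        show (1:ℝ) ≤ 1 + Λ k
        linarith [hΛnn k hk.2])
    simpa using h
  have hPrpos : 0 < Pr := by linarith
  set GM : ℝ := Pr ^ ((1 : ℝ) / n) with hGM_def
  have hGM1 : 1 ≤ GM := by
    rw [hGM_def]
    calc (1:ℝ) = 1 ^ ((1:ℝ)/n) := (Real.one_rpow _).symm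
      _ ≤ Pr ^ ((1:ℝ)/n) := Real.rpow_le_rpow (by norm_num) hPr1 (by positivity)
  have hGMpos : 0 < GM := by linarith
  have hGMn : GM ^ n = Pr := by
    rw [hGM_def, ← Real.rpow_natCast (Pr ^ ((1:ℝ)/n)) n, ← Real.rpow_mul (le_of_lt hPrpos)]
    rw [one_div, inv_mul_cancel₀ (by positivity : (n:ℝ) ≠ 0)]
    exact Real.rpow_one Pr
  have hΛn1 : 0 ≤ Λ (n - 1) := hΛnn (n - 1) le_rfl
  set T : ℝ := (1 + Λ (n - 1)) * GM with hT_def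
  have hT1 : 1 ≤ T := by
    rw [hT_def]
    nlinarith
  have hTpos : 0 < T := by linarith
  -- the key claim
  have claim : ∀ ε : ℝ, 0 < ε → ∀ C : Finset X, C.card ≤ 2 ^ n →
      symConvHull K ⊆ ⋃ c ∈ C, Metric.closedBall c ε → σ ≤ 6 * T * n * ε := by
    intro ε hε C hCcard hCsub
    by_contra hcon
    push_neg at hcon
    have hnR : (0:ℝ) < n := by exact_mod_cast hn
    have hσpos : 0 < σ := lt_trans (by positivity) hcon
    set B : ℝ := 3 * GM * n with hB_def
    have hBpos : 0 < B := by positivity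
    set β : ℕ → ℝ := fun k => 1 + Λ k with hβ_def
    have hβpos : ∀ k, k ≤ n - 1 → 0 < β k := by
      intro k hk
      have := hΛnn k hk
      simp only [hβ_def]
      linarith
    have hmle : ∀ m : Fin n, (m : ℕ) ≤ n - 1 := fun m => Nat.le_pred_of_lt m.2
    set G : Fin n → Submodule.span ℝ K :=
      fun m => if (m : ℕ) + 1 = n then x else fs ((m : ℕ) + 1) with hG_def
    have hGK : ∀ m : Fin n, (G m : X) ∈ K := by
      intro m
      have hm2 := m.2
      simp only [hG_def]
      split
      · exact hxK
      · next h => exact hfsK ((m:ℕ)+1) (by omega) (by omega)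
    have hGXs : ∀ m : Fin n, ∀ k : ℕ, (m:ℕ) < k → k ≤ n - 1 → (G m : X) ∈ Xs k := by
      intro m k hmk hkn
      have hm2 := m.2
      have hne2 : ¬((m:ℕ) + 1 = n) := by omega
      simp only [hG_def, if_neg hne2]
      rw [hXs k]
      exact Submodule.subset_span ⟨(m:ℕ)+1, ⟨by omega, by omega⟩, rfl⟩
    set ρ : Fin n → X := fun m => (G m : X) - P (m : ℕ) (G m) with hρ_def
    have hρσ : ∀ m : Fin n, σ ≤ (1 + Λ (n - 1)) * ‖ρ m‖ := by
      intro m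
      by_cases hmn : (m : ℕ) + 1 = n
      · have hk : (m : ℕ) = n - 1 := by omega
        have hρeq : ρ m = (x : X) - P (n-1) x := by
          simp only [hρ_def, hG_def, hk]
          rw [if_pos (show n - 1 + 1 = n by omega)]
        rw [hρeq, ← hσ_def]
        nlinarith [hσnn, hΛn1]
      · have hm2 := m.2
        have hk1 : 1 ≤ (m:ℕ) + 1 := by omega
        have hk2 : (m:ℕ) + 1 ≤ n - 1 := by omega
        have hgr := hgreedy ((m:ℕ)+1) hk1 hk2 x hxK
        simp only [Nat.add_sub_cancel] at hgr
        have hρm : ρ m = (fs ((m:ℕ)+1) : X) - P (m:ℕ) (fs ((m:ℕ)+1)) := by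
          simp only [hρ_def, hG_def, if_neg hmn]
        have hwXs : P (m:ℕ) x ∈ Xs (m:ℕ) := hPmem (m:ℕ) (hmle m) x
        set w' : Submodule.span ℝ K := ⟨P (m:ℕ) x, hXsle (m:ℕ) hwXs⟩ with hw'_def
        have hcoe : ((x - w' : Submodule.span ℝ K) : X) = (x:X) - P (m:ℕ) x := by
          simp [hw'_def]
        have hPw' : P (n-1) w' = P (m:ℕ) x := hPid (n-1) le_rfl w' (hXsmono _ _ (hmle m) hwXs)
        have hrepr : (x:X) - P (n-1) x
            = ((x - w' : Submodule.span ℝ K) : X) - P (n-1) (x - w') := by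
          rw [map_sub, hPw', hcoe]
          abel
        have hstep1 : σ ≤ (1 + Λ (n-1)) * ‖(x:X) - P (m:ℕ) x‖ := by
          have h1 := norm_sub_le (((x - w' : Submodule.span ℝ K) : X)) (P (n-1) (x - w'))
          have h2 := hPnorm (n-1) le_rfl (x - w')
          rw [hcoe] at h1 h2
          rw [hσ_def, hrepr, hcoe]
          have h3 := norm_nonneg ((x:X) - P (m:ℕ) x)
          nlinarith
        rw [hρm]
        calc σ ≤ (1 + Λ (n-1)) * ‖(x:X) - P (m:ℕ) x‖ := hstep1
          _ ≤ (1 + Λ (n-1)) * ‖(fs ((m:ℕ)+1) : X) - P (m:ℕ) (fs ((m:ℕ)+1))‖ :=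
            mul_le_mul_of_nonneg_left hgr (by linarith)
    -- the grid
    set a : Fin n → ℕ := fun m => ⌊B / (n * β (m:ℕ))⌋₊ with ha_def
    set wt : Fin n → ℝ := fun m => β (m:ℕ) / B with hwt_def
    have hwtpos : ∀ m : Fin n, 0 < wt m := fun m => div_pos (hβpos _ (hmle m)) hBpos
    have ha_le : ∀ m : Fin n, (a m : ℝ) ≤ B / (n * β (m:ℕ)) := by
      intro m
      exact Nat.floor_le (le_of_lt (div_pos hBpos (mul_pos hnR (hβpos _ (hmle m)))))
    have ha_lt : ∀ m : Fin n, B / (n * β (m:ℕ)) < 2 * (a m : ℝ) + 1 := by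
      intro m
      have h1 := Nat.lt_floor_add_one (B / (n * β (m:ℕ)))
      have h2 : (0:ℝ) ≤ (a m : ℝ) := Nat.cast_nonneg _
      simp only [ha_def] at h1 ⊢
      linarith
    set Gr : Finset (Fin n → ℤ) :=
      Fintype.piFinset (fun m => Finset.Icc (-(a m : ℤ)) ((a m : ℤ))) with hGr_def
    have hGrcardNat : Gr.card = ∏ m : Fin n, (2 * a m + 1) := by
      rw [hGr_def, Fintype.card_piFinset]
      apply Finset.prod_congr rfl
      intro m _
      rw [Int.card_Icc]
      omega
    have hprodβ : ∏ m : Fin n, β (m:ℕ) = Pr := by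
      rw [Fin.prod_univ_eq_prod_range (fun i => β i) n]
      rw [show Finset.range n = insert 0 (Finset.Icc 1 (n-1)) by
        ext i
        simp only [Finset.mem_range, Finset.mem_insert, Finset.mem_Icc]
        omega]
      rw [Finset.prod_insert (by simp)]
      simp only [hβ_def, hΛ0, hPr_def]
      ring
    have hcard : (2:ℝ)^n < (Gr.card : ℝ) := by
      have h3 : (3:ℝ)^n = ∏ m : Fin n, (B / (n * β (m:ℕ))) := by
        rw [Finset.prod_div_distrib, Finset.prod_const, Finset.prod_mul_distrib,
          Finset.prod_const, hprodβ, Finset.card_univ, Fintype.card_fin]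
        rw [hB_def]
        rw [mul_pow, mul_pow, ← hGMn]
        field_simp
      have hle : ∏ m : Fin n, (B / (n * β (m:ℕ))) ≤ ∏ m : Fin n, (2 * (a m:ℝ) + 1) :=
        Finset.prod_le_prod
          (fun m _ => le_of_lt (div_pos hBpos (mul_pos hnR (hβpos _ (hmle m)))))
          (fun m _ => le_of_lt (ha_lt m))
      have hGrcast : (Gr.card : ℝ) = ∏ m : Fin n, (2 * (a m:ℝ) + 1) := by
        rw [hGrcardNat]
        push_cast
        rfl
      have h23 : (2:ℝ)^n < 3^n := by
        apply pow_lt_pow_left₀ (by norm_num) (by norm_num)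
        omega
      rw [hGrcast]
      linarith [h3 ▸ hle]
    have hcardN : 2^n < Gr.card := by exact_mod_cast hcard
    set pS : (Fin n → ℤ) → Submodule.span ℝ K :=
      fun v => ∑ m : Fin n, (((v m : ℝ)) * wt m) • G m with hpS_def
    have hsum_bound : ∀ v ∈ Gr, ∑ m : Fin n, |(v m : ℝ) * wt m| ≤ 1 := by
      intro v hv
      have hterm : ∀ m : Fin n, |(v m : ℝ) * wt m| ≤ 1 / n := by
        intro m
        have hvm := Fintype.mem_piFinset.mp hv m
        rw [Finset.mem_Icc] at hvm
        have h1 : |(v m : ℝ)| ≤ (a m : ℝ) := by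
          rw [abs_le]
          constructor
          · exact_mod_cast hvm.1
          · exact_mod_cast hvm.2
        rw [abs_mul, abs_of_pos (hwtpos m)]
        calc |(v m:ℝ)| * wt m ≤ (a m : ℝ) * wt m :=
              mul_le_mul_of_nonneg_right h1 (le_of_lt (hwtpos m))
          _ ≤ (B / (n * β (m:ℕ))) * wt m :=
              mul_le_mul_of_nonneg_right (ha_le m) (le_of_lt (hwtpos m))
          _ = 1 / n := by
              have hβne : β (m:ℕ) ≠ 0 := ne_of_gt (hβpos _ (hmle m))
              have hBne : B ≠ 0 := ne_of_gt hBpos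
              have hnne : (n:ℝ) ≠ 0 := ne_of_gt hnR
              simp only [hwt_def]
              field_simp
      calc ∑ m : Fin n, |(v m:ℝ) * wt m| ≤ ∑ _m : Fin n, (1/n : ℝ) :=
            Finset.sum_le_sum (fun m _ => hterm m)
        _ = 1 := by
            rw [Finset.sum_const, Finset.card_univ, Fintype.card_fin, nsmul_eq_mul]
            field_simp
    have hpS_mem : ∀ v ∈ Gr, ((pS v : X)) ∈ symConvHull K := by
      intro v hv
      have hcoe : ((pS v : X)) = ∑ m : Fin n, ((v m : ℝ) * wt m) • (G m : X) := by
        simp [hpS_def]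
      rw [hcoe]
      exact subset_closure (hull_mem K _ _ hGK (hsum_bound v hv) ⟨_, hxK⟩)
    have hcov : ∀ v ∈ Gr, ∃ c ∈ C, (pS v : X) ∈ Metric.closedBall c ε := by
      intro v hv
      have h := hCsub (hpS_mem v hv)
      simpa using h
    set f : (Fin n → ℤ) → X := fun v =>
      if h : ∃ c ∈ C, (pS v : X) ∈ Metric.closedBall c ε then h.choose else 0 with hf_def
    have hfC : ∀ v ∈ Gr, f v ∈ C ∧ (pS v : X) ∈ Metric.closedBall (f v) ε := by
      intro v hv
      have h := hcov v hv
      simp only [hf_def, dif_pos h]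
      exact ⟨h.choose_spec.1, h.choose_spec.2⟩
    obtain ⟨v, hv, v', hv', hvv, hfeq⟩ :=
      Finset.exists_ne_map_eq_of_card_lt_of_maps_to (lt_of_le_of_lt hCcard hcardN)
        (fun v hv => (hfC v hv).1)
    have hdist : dist ((pS v : X)) ((pS v' : X)) ≤ 2 * ε := by
      have h1 := (hfC v hv).2
      have h2 := (hfC v' hv').2
      rw [Metric.mem_closedBall] at h1 h2
      rw [← hfeq] at h2
      calc dist (pS v : X) (pS v' : X)
          ≤ dist (pS v : X) (f v) + dist (pS v' : X) (f v) := dist_triangle_right _ _ _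
        _ ≤ ε + ε := add_le_add h1 h2
        _ = 2 * ε := by ring
    set d : Fin n → ℤ := fun m => v m - v' m with hd_def
    have hdne : ∃ m, d m ≠ 0 := by
      by_contra hno
      push_neg at hno
      apply hvv
      funext m
      have := hno m
      simp only [hd_def, sub_eq_zero] at this
      exact this
    obtain ⟨mx, hdmx, hmax⟩ : ∃ mx : Fin n, d mx ≠ 0 ∧ ∀ m : Fin n, d m ≠ 0 → m ≤ mx := by
      obtain ⟨m0, hm0⟩ := hdne
      have hsfne : (Finset.univ.filter (fun m => d m ≠ 0)).Nonempty :=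
        ⟨m0, by simp [hm0]⟩
      refine ⟨(Finset.univ.filter (fun m => d m ≠ 0)).max' hsfne, ?_, ?_⟩
      · have := (Finset.univ.filter (fun m => d m ≠ 0)).max'_mem hsfne
        simp only [Finset.mem_filter] at this
        exact this.2
      · exact fun m hm => Finset.le_max' _ m (by simp [hm])
    obtain ⟨z, hz_def⟩ : ∃ z : Submodule.span ℝ K, z = pS v - pS v' := ⟨_, rfl⟩
    have hzrepr : z = ∑ m : Fin n, ((d m : ℝ) * wt m) • G m := by
      rw [hz_def, hpS_def, ← Finset.sum_sub_distrib]
      apply Finset.sum_congr rfl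
      intro m _
      rw [← sub_smul]
      congr 1
      simp only [hd_def]
      push_cast
      ring
    have hEz : (z : X) - P (mx : ℕ) z = ((d mx : ℝ) * wt mx) • ρ mx := by
      have hcoeS : ((z : X)) = ∑ m : Fin n, ((d m : ℝ) * wt m) • (G m : X) := by
        rw [hzrepr, Submodule.coe_sum]
        exact Finset.sum_congr rfl (fun m _ => rfl)
      have hPS : P (mx:ℕ) z = ∑ m : Fin n, ((d m : ℝ) * wt m) • (P (mx:ℕ) (G m)) := by
        rw [hzrepr, map_sum]
        exact Finset.sum_congr rfl (fun m _ => (P (mx:ℕ)).map_smul _ _)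
      rw [hcoeS, hPS, ← Finset.sum_sub_distrib]
      have hsm : ∀ m : Fin n,
          ((d m : ℝ) * wt m) • (G m : X) - ((d m : ℝ) * wt m) • (P (mx:ℕ) (G m))
          = ((d m : ℝ) * wt m) • ((G m : X) - P (mx:ℕ) (G m)) :=
        fun m => (smul_sub _ _ _).symm
      rw [Finset.sum_congr rfl (fun m _ => hsm m)]
      rw [Finset.sum_eq_single mx]
      · intro m _ hm
        by_cases hdm : d m = 0
        · simp [hdm]
        · have hlt : m < mx := lt_of_le_of_ne (hmax m hdm) hm
          have hid : P (mx:ℕ) (G m) = (G m : X) :=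
            hPid (mx:ℕ) (hmle mx) (G m) (hGXs m (mx:ℕ) hlt (hmle mx))
          rw [hid, sub_self, smul_zero]
      · intro h
        exact absurd (Finset.mem_univ mx) h
    have hΛmxpos : (0:ℝ) < 1 + Λ (mx:ℕ) := by
      have := hΛnn (mx:ℕ) (hmle mx)
      linarith
    have hΛn1pos : (0:ℝ) < 1 + Λ (n-1) := by linarith
    have hzn : σ / ((1 + Λ (n-1)) * B) ≤ ‖(z:X)‖ := by
      have h2 := hPnorm (mx:ℕ) (hmle mx) z
      have h1 : ‖(z:X) - P (mx:ℕ) z‖ ≤ (1 + Λ (mx:ℕ)) * ‖(z:X)‖ := by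
        calc ‖(z:X) - P (mx:ℕ) z‖ ≤ ‖(z:X)‖ + ‖P (mx:ℕ) z‖ := norm_sub_le _ _
          _ ≤ ‖(z:X)‖ + Λ (mx:ℕ) * ‖(z:X)‖ := add_le_add_right h2 _
          _ = (1 + Λ (mx:ℕ)) * ‖(z:X)‖ := by ring
      have h3 : ‖(z:X) - P (mx:ℕ) z‖ = |(d mx : ℝ)| * wt mx * ‖ρ mx‖ := by
        rw [hEz, norm_smul, Real.norm_eq_abs, abs_mul, abs_of_pos (hwtpos mx)]
      have h4 : 1 ≤ |(d mx : ℝ)| := by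
        have := Int.one_le_abs hdmx
        exact_mod_cast this
      have h5 : σ / (1 + Λ (n-1)) ≤ ‖ρ mx‖ :=
        (div_le_iff₀ hΛn1pos).mpr (by rw [mul_comm]; exact hρσ mx)
      have h6 : wt mx * (σ / (1 + Λ (n-1))) ≤ ‖(z:X) - P (mx:ℕ) z‖ := by
        rw [h3]
        have hc : 0 ≤ σ / (1 + Λ (n-1)) := div_nonneg hσnn (le_of_lt hΛn1pos)
        calc wt mx * (σ/(1+Λ (n-1))) = (1 * wt mx) * (σ/(1+Λ (n-1))) := by ring
          _ ≤ (|(d mx:ℝ)| * wt mx) * ‖ρ mx‖ := by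
            apply mul_le_mul ?_ h5 hc ?_
            · exact mul_le_mul_of_nonneg_right h4 (le_of_lt (hwtpos mx))
            · positivity
      have h8 : wt mx * (σ / (1 + Λ (n-1))) = (1 + Λ (mx:ℕ)) * (σ / ((1 + Λ (n-1)) * B)) := by
        simp only [hwt_def, hβ_def]
        field_simp
      have h7 : (1 + Λ (mx:ℕ)) * (σ / ((1 + Λ (n-1)) * B)) ≤ (1 + Λ (mx:ℕ)) * ‖(z:X)‖ := by
        rw [← h8]
        exact le_trans h6 h1
      exact le_of_mul_le_mul_left h7 hΛmxpos
    have hdisteq : dist ((pS v : X)) ((pS v' : X)) = ‖(z:X)‖ := by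
      rw [dist_eq_norm]
      congr 1
      rw [hz_def, Submodule.coe_sub]
    have hδ : 2 * ε < σ / ((1 + Λ (n-1)) * B) := by
      rw [lt_div_iff₀ (mul_pos hΛn1pos hBpos)]
      have heq : 2 * ε * ((1 + Λ (n-1)) * B) = 6 * T * n * ε := by
        rw [hB_def, hT_def]
        ring
      rw [heq]
      exact hcon
    rw [hdisteq] at hdist
    exact absurd hdist (not_le.mpr (lt_of_lt_of_le hδ hzn))
  -- conclude
  have hnR : (0:ℝ) < n := by exact_mod_cast hn
  have h6Tn : 0 < 6 * T * n := by positivity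
  have hlb : σ / (6 * T * n) ≤ sInf S := by
    apply le_csInf hSne
    rintro ε ⟨hε, C, hC1, hC2⟩
    rw [div_le_iff₀ h6Tn]
    calc σ ≤ 6 * T * n * ε := claim ε hε C hC1 hC2
      _ = ε * (6 * T * n) := by ring
  rw [hEnt]
  have : σ ≤ 6 * T * (n : ℝ) * sInf S := by
    rw [div_le_iff₀ h6Tn] at hlb
    calc σ ≤ sInf S * (6 * T * n) := hlb
      _ = 6 * T * n * sInf S := by ring
  calc ‖(x : X) - P (n - 1) x‖ = σ := rfl
    _ ≤ 6 * T * n * sInf S := this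
    _ = 6 * (1 + Λ (n - 1)) * Pr ^ ((1:ℝ)/n) * n * sInf S := by
        rw [hT_def, hGM_def]; ring

end
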